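/- Let k ≥ 1 and c ≥ 1 be integers and let p ∈ (0,1) with q = 1 - p. For y ∈ ℕ let ℓ(p, y) = c · log(1 - (1-p)^k) + k·y·log(1-p). Then ∑_{y=0}^∞ C(c+y-1, y) · (1-q^k)^c · q^{ky} · (−∂²ℓ/∂p²)(p, y) = c k² q^{k-2} / (1 - q^k)², where ∂²ℓ/∂p² denotes the second derivative of ℓ(·, y) with respect to p. -/

import Mathlib

theorem aux_val (k m : ℕ) (hk : 1 ≤ k) (q : ℝ) (hq0 : 0 < q) (hden : 0 < 1 - q ^ k) :
    ((m : ℝ) + 1) * (k : ℝ) ^ 2 * q ^ ((k : ℝ) - 2) / (1 - q ^ k) ^ 2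
      = (1 - q ^ k) ^ (m + 1) * (((m : ℝ) + 1) * k *
            (((k : ℝ) - 1) * q ^ (k - 2) * (1 - q ^ k) + k * q ^ (k - 1) * q ^ (k - 1))
              / (1 - q ^ k) ^ 2) * (1 / (1 - q ^ k) ^ (m + 1))
        + (1 - q ^ k) ^ (m + 1) * ((k : ℝ) / q ^ 2) *
            (((m : ℝ) + 1) * (q ^ k * (1 / (1 - q ^ k) ^ (m + 2)))) := by
  have hrpow : q ^ ((k : ℝ) - 2) = q ^ k / q ^ 2 := by
    rw [show ((k : ℝ) - 2) = ((k : ℕ) : ℝ) - ((2 : ℕ) : ℝ) by norm_num,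
      ← Real.rpow_natCast q k, ← Real.rpow_natCast q 2, ← Real.rpow_sub hq0]
  rw [hrpow]
  have hq0' : q ≠ 0 := ne_of_gt hq0
  have hden' : (1 : ℝ) - q ^ k ≠ 0 := ne_of_gt hden
  have hS : (1 - q ^ k) ^ (m + 1) * (1 / (1 - q ^ k) ^ (m + 1)) = 1 := by
    rw [mul_one_div, div_self (pow_ne_zero _ hden')]
  have key1 : ∀ X : ℝ, (1 - q ^ k) ^ (m + 1) * X * (1 / (1 - q ^ k) ^ (m + 1)) = X := by
    intro X
    calc (1 - q ^ k) ^ (m + 1) * X * (1 / (1 - q ^ k) ^ (m + 1))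
        = ((1 - q ^ k) ^ (m + 1) * (1 / (1 - q ^ k) ^ (m + 1))) * X := by ring
      _ = X := by rw [hS, one_mul]
  have key2 : (1 - q ^ k) ^ (m + 1) * ((k : ℝ) / q ^ 2) *
        (((m : ℝ) + 1) * (q ^ k * (1 / (1 - q ^ k) ^ (m + 2))))
      = (k : ℝ) / q ^ 2 * (((m : ℝ) + 1) * (q ^ k / (1 - q ^ k))) := by
    calc (1 - q ^ k) ^ (m + 1) * ((k : ℝ) / q ^ 2) *
          (((m : ℝ) + 1) * (q ^ k * (1 / (1 - q ^ k) ^ (m + 2))))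
        = ((1 - q ^ k) ^ (m + 1) * (1 / (1 - q ^ k) ^ (m + 1))) *
            ((k : ℝ) / q ^ 2 * (((m : ℝ) + 1) * (q ^ k / (1 - q ^ k)))) := by
          rw [pow_succ (1 - q ^ k) (m + 1), one_div, mul_inv, div_eq_mul_inv (q ^ k)]
          ring
      _ = _ := by rw [hS, one_mul]
  rw [key1, key2]
  rcases k with _ | _ | j
  · omega
  · simp only [zero_add, pow_one, Nat.cast_one, show 1 - 2 = 0 from rfl,
      show 1 - 1 = 0 from rfl, pow_zero]
    have h1q : 1 - q ≠ 0 := by simpa using hden'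
    field_simp
    ring
  · have e1 : j + 2 - 2 = j := by omega
    have e2 : j + 2 - 1 = j + 1 := by omega
    rw [e1, e2]
    field_simp
    ring


/-- Fisher information under model (b):
E[-∂²ℓ/∂p²] = c k² q^(k-2)/(1-q^k)², where q = 1 - p and
ℓ(p,y) = c·log(1-(1-p)^k) + k·y·log(1-p). -/
theorem stmt_12 (k c : ℕ) (hk : 1 ≤ k) (hc : 1 ≤ c) (p : ℝ)
    (hp : p ∈ Set.Ioo (0 : ℝ) 1) :
    HasSum (fun y : ℕ =>
      ((c + y - 1).choose y : ℝ) * (1 - (1 - p) ^ k) ^ c * (1 - p) ^ (k * y) *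
        (- iteratedDeriv 2
            (fun t : ℝ => c * Real.log (1 - (1 - t) ^ k) + k * y * Real.log (1 - t)) p))
      ((c : ℝ) * k ^ 2 * (1 - p) ^ ((k : ℝ) - 2) / (1 - (1 - p) ^ k) ^ 2) := by
  obtain ⟨hp0, hp1⟩ := hp
  set q : ℝ := 1 - p with hqdef
  have hq0 : 0 < q := by simp only [hqdef]; linarith
  have hq1 : q < 1 := by simp only [hqdef]; linarith
  have hqk1 : q ^ k < 1 := pow_lt_one₀ hq0.le hq1 (by omega)
  have hqk0 : 0 < q ^ k := pow_pos hq0 k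
  have hden : 0 < 1 - q ^ k := by linarith
  -- the second derivative
  set A : ℝ := (c:ℝ) * k * (((k:ℝ) - 1) * q ^ (k - 2) * (1 - q ^ k) + k * q ^ (k-1) * q ^ (k-1))
      / (1 - q ^ k) ^ 2 with hAdef
  have hderiv : ∀ y : ℕ,
      - iteratedDeriv 2
          (fun t : ℝ => c * Real.log (1 - (1 - t) ^ k) + k * y * Real.log (1 - t)) p
        = A + (k : ℝ) / q ^ 2 * y := by
    intro y
    set g : ℝ → ℝ := fun t => (c:ℝ) * (-((k:ℝ) * (1 - t) ^ (k - 1) * (-1)) / (1 - (1 - t) ^ k))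
        + (k:ℝ) * y * (-1 / (1 - t)) with hgdef
    have key1 : ∀ t ∈ Set.Ioo (0:ℝ) 1,
        HasDerivAt (fun t : ℝ => c * Real.log (1 - (1 - t) ^ k) + k * y * Real.log (1 - t))
          (g t) t := by
      intro t ht
      obtain ⟨ht0, ht1⟩ := ht
      have h1t : (0:ℝ) < 1 - t := by linarith
      have h1 : HasDerivAt (fun t : ℝ => 1 - t) (-1) t := (hasDerivAt_id t).const_sub 1
      have h2 : HasDerivAt (fun t : ℝ => (1 - t) ^ k) ((k:ℝ) * (1 - t) ^ (k - 1) * (-1)) t :=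
        h1.pow k
      have h4 : HasDerivAt (fun t : ℝ => 1 - (1 - t) ^ k)
          (-((k:ℝ) * (1 - t) ^ (k - 1) * (-1))) t := h2.const_sub 1
      have hne : 1 - (1 - t) ^ k ≠ 0 := by
        have : (1 - t) ^ k < 1 := pow_lt_one₀ h1t.le (by linarith) (by omega)
        linarith
      have h5 := h4.log hne
      have h6 : HasDerivAt (fun t : ℝ => Real.log (1 - t)) (-1 / (1 - t)) t := h1.log (ne_of_gt h1t)
      exact (h5.const_mul (c:ℝ)).add (h6.const_mul ((k:ℝ) * y))
    have hEq : deriv (fun t : ℝ => c * Real.log (1 - (1 - t) ^ k) + k * y * Real.log (1 - t))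
        =ᶠ[nhds p] g := by
      filter_upwards [Ioo_mem_nhds hp0 hp1] with t ht
      exact (key1 t ht).deriv
    -- derivative of g at p
    have h1 : HasDerivAt (fun t : ℝ => 1 - t) (-1) p := (hasDerivAt_id p).const_sub 1
    have hq : 1 - p = q := rfl
    have hne : 1 - (1 - p) ^ k ≠ 0 := by rw [hq]; exact ne_of_gt hden
    have hN : HasDerivAt (fun t : ℝ => -((k:ℝ) * (1 - t) ^ (k - 1) * (-1)))
        (-((k:ℝ) * (((k-1 : ℕ):ℝ) * (1 - p) ^ (k - 1 - 1) * (-1)) * (-1))) p :=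
      (((h1.pow (k-1)).const_mul (k:ℝ)).mul_const (-1)).neg
    have hD : HasDerivAt (fun t : ℝ => 1 - (1 - t) ^ k)
        (-((k:ℝ) * (1 - p) ^ (k - 1) * (-1))) p := (h1.pow k).const_sub 1
    have hQuot := (hN.div hD hne).const_mul (c:ℝ)
    have hInv : HasDerivAt (fun t : ℝ => -1 / (1 - t))
        ((0 * (1 - p) - (-1) * (-1)) / (1 - p) ^ 2) p :=
      (hasDerivAt_const p (-1)).div h1 (by rw [hq]; exact ne_of_gt hq0)
    have hg' := hQuot.add (hInv.const_mul ((k:ℝ) * y))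
    have : iteratedDeriv 2
        (fun t : ℝ => c * Real.log (1 - (1 - t) ^ k) + k * y * Real.log (1 - t)) p
        = deriv g p := by
      rw [show (2:ℕ) = 1 + 1 from rfl, iteratedDeriv_succ, iteratedDeriv_one]
      exact Filter.EventuallyEq.deriv_eq hEq
    rw [this, show deriv g p = _ from hg'.deriv]
    -- now algebra
    have hk2 : k - 1 - 1 = k - 2 := by omega
    have hcast : ((k - 1 : ℕ) : ℝ) = (k:ℝ) - 1 := by
      push_cast [Nat.cast_sub hk]; ring
    rw [hq, hk2, hcast, hAdef]
    have hqk1' : q ^ (k-1) * q = q ^ k := by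
      rw [← pow_succ]; congr 1; omega
    field_simp
    ring_nf

  -- sums
  set r : ℝ := q ^ k with hrdef
  have hr : ‖r‖ < 1 := by rw [Real.norm_eq_abs, abs_of_pos hqk0]; exact hqk1
  obtain ⟨m, hm⟩ : ∃ m, c = m + 1 := ⟨c - 1, by omega⟩
  have hchoose : ∀ y : ℕ, (c + y - 1).choose y = (y + m).choose m := by
    intro y
    rw [show c + y - 1 = y + m by omega]
    exact Nat.choose_symm_add
  have hs1 : HasSum (fun y : ℕ => (((y + m).choose m : ℝ)) * r ^ y) (1 / (1 - r) ^ (m + 1)) :=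
    hasSum_choose_mul_geometric_of_norm_lt_one m hr
  set F : ℕ → ℝ := fun y => (((y + m).choose (m + 1) : ℝ)) * r ^ y with hFdef
  have hshift : HasSum (fun n => F (n + 1)) (r * (1 / (1 - r) ^ (m + 2))) := by
    have h2 := (hasSum_choose_mul_geometric_of_norm_lt_one (m + 1) hr).mul_left r
    convert h2 using 2 with n
    · rfl
    simp only [hFdef]
    rw [show n + 1 + m = n + (m + 1) by omega, pow_succ]
    ring
  have hF : HasSum F (r * (1 / (1 - r) ^ (m + 2))) := by
    have h0 := (hasSum_nat_add_iff (f := F) 1).mp hshift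
    simpa [hFdef, Nat.choose_eq_zero_of_lt (Nat.lt_succ_self m)] using h0
  have hsy : HasSum (fun y : ℕ => (y : ℝ) * (((y + m).choose m : ℝ)) * r ^ y)
      (((m : ℝ) + 1) * (r * (1 / (1 - r) ^ (m + 2)))) := by
    have h3 := hF.mul_left ((m : ℝ) + 1)
    convert h3 using 2 with y
    · rfl
    simp only [hFdef]
    have hcast : ((y + m).choose (m + 1) : ℝ) * ((m : ℝ) + 1) = ((y + m).choose m : ℝ) * y := by
      exact_mod_cast congrArg (fun n : ℕ => (n : ℝ)) (Nat.choose_succ_right_eq (y + m) m |>.trans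
        (by rw [Nat.add_sub_cancel]))
    linear_combination (-(r ^ y)) * hcast
  -- assemble
  have htot := (hs1.mul_left ((1 - r) ^ c * A)).add
      (hsy.mul_left ((1 - r) ^ c * ((k : ℝ) / q ^ 2)))
  convert htot using 1
  · rfl
  · funext y
    rw [hderiv y, hchoose y, show (1 - p) ^ (k * y) = r ^ y by rw [pow_mul], hqdef]
    ring
  · rw [hAdef, hrdef, hm]
    push_cast
    exact aux_val k m hk q hq0 hden
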